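/- (Error Reduction Lemma) Let X be a uniformly smooth Banach space with modulus of smoothness ρ. Let f, f^ε ∈ X with ‖f − f^ε‖ ≤ ε and f^ε/A ∈ A_1(D) for some A ≥ ε > 0. Suppose f = f_{m-1} + G_{m-1} with f_{m-1} ≠ 0, F_{f_{m-1}}(G_{m-1}) = 0, and φ_m ∈ D satisfies F_{f_{m-1}}(φ_m) ≥ t_m sup_{g∈D} F_{f_{m-1}}(g). Then inf_{λ≥0} ‖f_{m-1} − λφ_m‖ ≤ ‖f_{m-1}‖ · inf_{λ≥0} (1 − λ t_m A^{−1}(1 − ε/‖f_{m-1}‖) + 2ρ(λ/‖f_{m-1}‖)). -/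
import Mathlib


/-- The modulus of smoothness of a real normed space. -/
noncomputable def modulusOfSmoothness (X : Type*) [NormedAddCommGroup X] [NormedSpace ℝ X]
    (u : ℝ) : ℝ :=
  sSup { r : ℝ | ∃ x y : X, ‖x‖ = 1 ∧ ‖y‖ = 1 ∧ r = (‖x + u • y‖ + ‖x - u • y‖) / 2 - 1 }

section aux
variable {X : Type*} [NormedAddCommGroup X] [NormedSpace ℝ X]

lemma modSet_bddAbove (u : ℝ) :
    BddAbove { r : ℝ | ∃ x y : X, ‖x‖ = 1 ∧ ‖y‖ = 1 ∧ r = (‖x + u • y‖ + ‖x - u • y‖) / 2 - 1 } := by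
  refine ⟨|u|, ?_⟩
  rintro r ⟨x, y, hx, hy, rfl⟩
  have h1 : ‖x + u • y‖ ≤ 1 + |u| := by
    calc ‖x + u • y‖ ≤ ‖x‖ + ‖u • y‖ := norm_add_le _ _
    _ = 1 + |u| := by rw [hx, norm_smul, hy, Real.norm_eq_abs, mul_one]
  have h2 : ‖x - u • y‖ ≤ 1 + |u| := by
    calc ‖x - u • y‖ ≤ ‖x‖ + ‖u • y‖ := norm_sub_le _ _
    _ = 1 + |u| := by rw [hx, norm_smul, hy, Real.norm_eq_abs, mul_one]
  linarith

lemma smooth_ineq (x y : X) (hx : x ≠ 0) (hy : ‖y‖ ≤ 1) (l : ℝ) (hl : 0 ≤ l) :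
    ‖x + l • y‖ + ‖x - l • y‖ ≤ 2 * ‖x‖ * (1 + modulusOfSmoothness X (l / ‖x‖)) := by
  have hc : (0:ℝ) < ‖x‖ := norm_pos_iff.mpr hx
  set u : ℝ := l / ‖x‖ with hu
  have hu0 : 0 ≤ u := div_nonneg hl hc.le
  set x' : X := ‖x‖⁻¹ • x with hx'
  have hx'n : ‖x'‖ = 1 := by
    rw [hx', norm_smul, Real.norm_eq_abs, abs_of_pos (inv_pos.mpr hc), inv_mul_cancel₀ hc.ne']
  have hxx : ‖x‖ • x' = x := by rw [hx', smul_smul, mul_inv_cancel₀ hc.ne', one_smul]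
  by_cases hy0 : y = 0
  · -- need ρ(u) ≥ 0
    have hmem : (‖x' + u • x'‖ + ‖x' - u • x'‖) / 2 - 1 ∈
        { r : ℝ | ∃ a b : X, ‖a‖ = 1 ∧ ‖b‖ = 1 ∧ r = (‖a + u • b‖ + ‖a - u • b‖) / 2 - 1 } :=
      ⟨x', x', hx'n, hx'n, rfl⟩
    have hge : (0:ℝ) ≤ (‖x' + u • x'‖ + ‖x' - u • x'‖) / 2 - 1 := by
      have : ‖x' + u • x'‖ = 1 + u := by
        rw [show x' + u • x' = (1 + u) • x' by module, norm_smul, Real.norm_eq_abs,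
          abs_of_nonneg (by linarith), hx'n, mul_one]
      have h2 : (0:ℝ) ≤ ‖x' - u • x'‖ + u - 1 := by
        rcases le_or_gt u 1 with h | h
        · have : ‖x' - u • x'‖ = 1 - u := by
            rw [show x' - u • x' = (1 - u) • x' by module, norm_smul, Real.norm_eq_abs,
              abs_of_nonneg (by linarith), hx'n, mul_one]
          linarith
        · linarith [norm_nonneg (x' - u • x')]
      linarith
    have hρ : (0:ℝ) ≤ modulusOfSmoothness X u :=
      le_trans hge (le_csSup (modSet_bddAbove u) hmem)
    simp only [hy0, smul_zero, add_zero, sub_zero]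
    nlinarith
  · set y' : X := ‖y‖⁻¹ • y with hy'
    have hyc : (0:ℝ) < ‖y‖ := norm_pos_iff.mpr hy0
    have hy'n : ‖y'‖ = 1 := by
      rw [hy', norm_smul, Real.norm_eq_abs, abs_of_pos (inv_pos.mpr hyc), inv_mul_cancel₀ hyc.ne']
    set u' : ℝ := l * ‖y‖ / ‖x‖ with hu'
    have hu'0 : 0 ≤ u' := div_nonneg (mul_nonneg hl hyc.le) hc.le
    have hu'u : u' ≤ u := by
      rw [hu', hu]
      have h1 : l * ‖y‖ ≤ l := by nlinarith
      gcongr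
    -- rewrite x ± l•y
    have hplus : x + l • y = ‖x‖ • (x' + u' • y') := by
      rw [smul_add, hxx, smul_smul, hu', hy', smul_smul]
      congr 2
      field_simp
    have hminus : x - l • y = ‖x‖ • (x' - u' • y') := by
      rw [smul_sub, hxx, smul_smul, hu', hy', smul_smul]
      congr 2
      field_simp
    -- monotonicity: h(u') ≤ h(u)
    have hmono : ‖x' + u' • y'‖ + ‖x' - u' • y'‖ ≤ ‖x' + u • y'‖ + ‖x' - u • y'‖ := by
      rcases eq_or_lt_of_le hu0 with h0 | h0
    -- if u = 0 then u' = 0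
      · have : u' = 0 := le_antisymm (by linarith) hu'0
        rw [this, ← h0]
      · set s : ℝ := u' / u with hs
        have hs0 : 0 ≤ s := div_nonneg hu'0 h0.le
        have hs1 : s ≤ 1 := by rw [hs]; exact div_le_one_of_le₀ hu'u h0.le
        have hsu : s * u = u' := by rw [hs]; field_simp
        have hrw1 : x' + u' • y' = s • (x' + u • y') + (1 - s) • x' := by
          rw [← hsu]; module
        have hrw2 : x' - u' • y' = s • (x' - u • y') + (1 - s) • x' := by
          rw [← hsu]; module
        have hb1 : ‖x' + u' • y'‖ ≤ s * ‖x' + u • y'‖ + (1 - s) := by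
          rw [hrw1]
          calc ‖s • (x' + u • y') + (1 - s) • x'‖ ≤ ‖s • (x' + u • y')‖ + ‖(1 - s) • x'‖ :=
              norm_add_le _ _
          _ = s * ‖x' + u • y'‖ + (1 - s) := by
              rw [norm_smul, norm_smul, Real.norm_eq_abs, Real.norm_eq_abs,
                abs_of_nonneg hs0, abs_of_nonneg (by linarith), hx'n, mul_one]
        have hb2 : ‖x' - u' • y'‖ ≤ s * ‖x' - u • y'‖ + (1 - s) := by
          rw [hrw2]
          calc ‖s • (x' - u • y') + (1 - s) • x'‖ ≤ ‖s • (x' - u • y')‖ + ‖(1 - s) • x'‖ :=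
              norm_add_le _ _
          _ = s * ‖x' - u • y'‖ + (1 - s) := by
              rw [norm_smul, norm_smul, Real.norm_eq_abs, Real.norm_eq_abs,
                abs_of_nonneg hs0, abs_of_nonneg (by linarith), hx'n, mul_one]
        have htwo : 2 ≤ ‖x' + u • y'‖ + ‖x' - u • y'‖ := by
          have : ‖(x' + u • y') + (x' - u • y')‖ ≤ ‖x' + u • y'‖ + ‖x' - u • y'‖ :=
            norm_add_le _ _
          have h2 : (x' + u • y') + (x' - u • y') = (2:ℝ) • x' := by module
          rw [h2, norm_smul, Real.norm_eq_abs, hx'n] at this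
          simpa using this
        nlinarith
    have hmem : (‖x' + u • y'‖ + ‖x' - u • y'‖) / 2 - 1 ∈
        { r : ℝ | ∃ a b : X, ‖a‖ = 1 ∧ ‖b‖ = 1 ∧ r = (‖a + u • b‖ + ‖a - u • b‖) / 2 - 1 } :=
      ⟨x', y', hx'n, hy'n, rfl⟩
    have hρ : (‖x' + u • y'‖ + ‖x' - u • y'‖) / 2 - 1 ≤ modulusOfSmoothness X u :=
      le_csSup (modSet_bddAbove u) hmem
    rw [hplus, hminus, norm_smul, norm_smul, Real.norm_eq_abs, abs_of_pos hc]
    nlinarith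

end aux


/-- `X` is uniformly smooth: `ρ(u)/u → 0` as `u → 0⁺`. -/
def UniformlySmooth (X : Type*) [NormedAddCommGroup X] [NormedSpace ℝ X] : Prop :=
  Filter.Tendsto (fun u : ℝ => modulusOfSmoothness X u / u)
    (nhdsWithin 0 (Set.Ioi 0)) (nhds 0)

/-- Error Reduction Lemma: if f = f_{m-1} + G_{m-1} with F_{f_{m-1}}(G_{m-1}) = 0,
φ_m is chosen greedily, ‖f - fε‖ ≤ ε and fε/A ∈ A₁(D) with A ≥ ε > 0, then
inf_{λ≥0} ‖f_{m-1} - λφ_m‖ ≤ ‖f_{m-1}‖ ⬝ inf_{λ≥0} (1 - λ t A⁻¹ (1 - ε/‖f_{m-1}‖)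
+ 2ρ(λ/‖f_{m-1}‖)). -/
theorem stmt_8 {X : Type*} [NormedAddCommGroup X] [NormedSpace ℝ X] [CompleteSpace X]
    (hsm : UniformlySmooth X)
    (D : Set X) (hsymm : ∀ g ∈ D, -g ∈ D) (hnorm : ∀ g ∈ D, ‖g‖ ≤ 1)
    (hdense : (Submodule.span ℝ D).topologicalClosure = ⊤)
    (ε A : ℝ) (hε : 0 < ε) (hA : ε ≤ A)
    (f fε : X) (hfε : ‖f - fε‖ ≤ ε) (hfA : A⁻¹ • fε ∈ closure (convexHull ℝ D))
    (fm1 Gm1 : X) (hsum : f = fm1 + Gm1) (hfm1 : fm1 ≠ 0)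
    (F : X →L[ℝ] ℝ) (hF1 : ‖F‖ = 1) (hFf : F fm1 = ‖fm1‖) (hbo : F Gm1 = 0)
    (t : ℝ) (ht : t ∈ Set.Icc (0:ℝ) 1)
    (φ : X) (hφD : φ ∈ D) (hgreedy : F φ ≥ t * sSup (F '' D)) :
    (⨅ l : {x : ℝ // 0 ≤ x}, ‖fm1 - (l : ℝ) • φ‖) ≤
      ‖fm1‖ * ⨅ l : {x : ℝ // 0 ≤ x},
        (1 - (l : ℝ) * t * A⁻¹ * (1 - ε / ‖fm1‖)
          + 2 * modulusOfSmoothness X ((l : ℝ) / ‖fm1‖)) := by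
  haveI : Nonempty {x : ℝ // 0 ≤ x} := ⟨⟨0, le_rfl⟩⟩
  have hc : (0:ℝ) < ‖fm1‖ := norm_pos_iff.mpr hfm1
  have hA0 : (0:ℝ) < A := lt_of_lt_of_le hε hA
  -- F x ≤ ‖x‖ for all x
  have hFle : ∀ x : X, F x ≤ ‖x‖ := by
    intro x
    calc F x ≤ |F x| := le_abs_self _
    _ ≤ ‖F‖ * ‖x‖ := F.le_opNorm x
    _ = ‖x‖ := by rw [hF1, one_mul]
  -- sup over D bound
  have hbdd : BddAbove (F '' D) := by
    refine ⟨1, ?_⟩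
    rintro r ⟨g, hg, rfl⟩
    exact le_trans (hFle g) (hnorm g hg)
  have hsupcl : ∀ x ∈ closure (convexHull ℝ D), F x ≤ sSup (F '' D) := by
    intro x hx
    have hsub : D ⊆ {z : X | F z ≤ sSup (F '' D)} := fun g hg => le_csSup hbdd ⟨g, hg, rfl⟩
    have hconvset : Convex ℝ {z : X | F z ≤ sSup (F '' D)} :=
      convex_halfSpace_le (LinearMap.isLinear (F : X →ₗ[ℝ] ℝ)) _
    have hclosed : IsClosed {z : X | F z ≤ sSup (F '' D)} :=
      isClosed_le F.continuous continuous_const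
    exact closure_minimal (convexHull_min hsub hconvset) hclosed hx
  -- F fε ≥ ‖fm1‖ - ε
  have hFf' : F f = ‖fm1‖ := by rw [hsum, map_add, hFf, hbo, add_zero]
  have hFfε : ‖fm1‖ - ε ≤ F fε := by
    have h1 : F (f - fε) ≤ ε := le_trans (hFle _) hfε
    rw [map_sub, hFf'] at h1
    linarith
  -- greedy bound
  have hsups : A⁻¹ * (‖fm1‖ - ε) ≤ sSup (F '' D) := by
    have h1 := hsupcl _ hfA
    rw [map_smul, smul_eq_mul] at h1
    have h2 : A⁻¹ * (‖fm1‖ - ε) ≤ A⁻¹ * F fε :=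
      mul_le_mul_of_nonneg_left hFfε (inv_nonneg.mpr hA0.le)
    linarith
  have hFφ : t * A⁻¹ * (‖fm1‖ - ε) ≤ F φ := by
    calc t * A⁻¹ * (‖fm1‖ - ε) = t * (A⁻¹ * (‖fm1‖ - ε)) := by ring
    _ ≤ t * sSup (F '' D) := mul_le_mul_of_nonneg_left hsups ht.1
    _ ≤ F φ := hgreedy
  -- pointwise key inequality
  have key : ∀ l : ℝ, 0 ≤ l → ‖fm1 - l • φ‖ ≤
      ‖fm1‖ * (1 - l * t * A⁻¹ * (1 - ε / ‖fm1‖) + 2 * modulusOfSmoothness X (l / ‖fm1‖)) := by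
    intro l hl
    have h1 := smooth_ineq fm1 φ hfm1 (hnorm φ hφD) l hl
    have h2 : ‖fm1‖ + l * F φ ≤ ‖fm1 + l • φ‖ := by
      have := hFle (fm1 + l • φ)
      rw [map_add, map_smul, smul_eq_mul, hFf] at this
      linarith
    have h3 : l * (t * A⁻¹ * (‖fm1‖ - ε)) ≤ l * F φ :=
      mul_le_mul_of_nonneg_left hFφ hl
    have h4 : ‖fm1‖ * (1 - l * t * A⁻¹ * (1 - ε / ‖fm1‖) + 2 * modulusOfSmoothness X (l / ‖fm1‖))
        = 2 * ‖fm1‖ * (1 + modulusOfSmoothness X (l / ‖fm1‖)) - ‖fm1‖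
          - l * (t * A⁻¹ * (‖fm1‖ - ε)) := by
      field_simp
      ring
    rw [h4]
    linarith
  -- infimum manipulation
  have hbddbelow : BddBelow (Set.range fun l : {x : ℝ // 0 ≤ x} => ‖fm1 - (l : ℝ) • φ‖) := by
    refine ⟨0, ?_⟩
    rintro b ⟨l, rfl⟩
    exact norm_nonneg _
  rw [← div_le_iff₀' hc]
  refine le_ciInf fun l => ?_
  rw [div_le_iff₀ hc]
  calc (⨅ l : {x : ℝ // 0 ≤ x}, ‖fm1 - (l : ℝ) • φ‖) ≤ ‖fm1 - (l : ℝ) • φ‖ :=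
      ciInf_le hbddbelow l
  _ ≤ ‖fm1‖ * (1 - (l : ℝ) * t * A⁻¹ * (1 - ε / ‖fm1‖)
        + 2 * modulusOfSmoothness X ((l : ℝ) / ‖fm1‖)) := key l l.2
  _ = (1 - (l : ℝ) * t * A⁻¹ * (1 - ε / ‖fm1‖)
        + 2 * modulusOfSmoothness X ((l : ℝ) / ‖fm1‖)) * ‖fm1‖ := mul_comm _ _
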